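/- Two-term functional relation for lower characteristic (1,0): for all real a, c and all complex u, v, θ[a,c;1,0](u,v) · θ[a,c;0,0](u,v) = Θ[a,c;1,0](2u,2v) · Θ[0,0;1,0](0,0) + Θ[a,c+1;1,0](2u,2v) · Θ[0,1;1,0](0,0). -/

import Mathlib

open Complex

/-- Genus-two theta function with real characteristics `a c b d`
(upper characteristics `a, c`, lower characteristics `b, d`),
moduli `τ₁ τ₂ τ₁₂` and complex arguments `x y`. -/
noncomputable def theta (τ₁ τ₂ τ₁₂ : ℂ) (a c b d : ℝ) (x y : ℂ) : ℂ :=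
  ∑' p : ℤ × ℤ,
    Complex.exp
      ((Real.pi : ℂ) * Complex.I *
          (τ₁ * ((p.1 : ℂ) + (a : ℂ) / 2) ^ 2 + τ₂ * ((p.2 : ℂ) + (c : ℂ) / 2) ^ 2 +
            2 * τ₁₂ * ((p.1 : ℂ) + (a : ℂ) / 2) * ((p.2 : ℂ) + (c : ℂ) / 2)) +
        2 * (Real.pi : ℂ) * Complex.I *
          (((p.1 : ℂ) + (a : ℂ) / 2) * (x + (b : ℂ) / 2) +
            ((p.2 : ℂ) + (c : ℂ) / 2) * (y + (d : ℂ) / 2)))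

/-- The same theta function with doubled moduli `2τ₁, 2τ₂, 2τ₁₂`. -/
noncomputable def Theta2 (τ₁ τ₂ τ₁₂ : ℂ) (a c b d : ℝ) (x y : ℂ) : ℂ :=
  theta (2 * τ₁) (2 * τ₂) (2 * τ₁₂) a c b d x y

/-! ### Auxiliary definitions and lemmas -/

/-- The general term of the genus-two theta series. -/
noncomputable def thetaTerm (τ₁ τ₂ τ₁₂ : ℂ) (a c b d : ℝ) (x y : ℂ) (p : ℤ × ℤ) : ℂ :=
  Complex.exp
    ((Real.pi : ℂ) * Complex.I *
        (τ₁ * ((p.1 : ℂ) + (a : ℂ) / 2) ^ 2 + τ₂ * ((p.2 : ℂ) + (c : ℂ) / 2) ^ 2 +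
          2 * τ₁₂ * ((p.1 : ℂ) + (a : ℂ) / 2) * ((p.2 : ℂ) + (c : ℂ) / 2)) +
      2 * (Real.pi : ℂ) * Complex.I *
        (((p.1 : ℂ) + (a : ℂ) / 2) * (x + (b : ℂ) / 2) +
          ((p.2 : ℂ) + (c : ℂ) / 2) * (y + (d : ℂ) / 2)))

lemma theta_eq_tsum (τ₁ τ₂ τ₁₂ : ℂ) (a c b d : ℝ) (x y : ℂ) :
    theta τ₁ τ₂ τ₁₂ a c b d x y = ∑' p : ℤ × ℤ, thetaTerm τ₁ τ₂ τ₁₂ a c b d x y p := rfl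

lemma quad_bound (y₁ y₂ y₁₂ : ℝ) (h1 : 0 < y₁) (h2 : 0 < y₂) (h : y₁₂ ^ 2 < y₁ * y₂)
    (α β : ℝ) :
    ∃ C : ℝ, ∀ s t : ℝ,
      -(y₁ * s ^ 2 + y₂ * t ^ 2 + 2 * y₁₂ * s * t) - (s * α + t * β) ≤ C - |s| - |t| := by
  set κ : ℝ := (y₁ * y₂ - y₁₂ ^ 2) / (y₁ + y₂) with hκdef
  have hsum : (0:ℝ) < y₁ + y₂ := by linarith
  have hκpos : 0 < κ := div_pos (by nlinarith) hsum
  have hκ' : κ * (y₁ + y₂) = y₁ * y₂ - y₁₂ ^ 2 := div_mul_cancel₀ _ (ne_of_gt hsum)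
  have hQ : ∀ s t : ℝ, κ * (s ^ 2 + t ^ 2) ≤ y₁ * s ^ 2 + y₂ * t ^ 2 + 2 * y₁₂ * s * t := by
    intro s t
    nlinarith [sq_nonneg (y₁ * s + y₁₂ * t), sq_nonneg (y₂ * t + y₁₂ * s), sq_nonneg s, sq_nonneg t]
  have key : ∀ (B s : ℝ), 0 ≤ B → -(κ * s ^ 2) + B * |s| ≤ B ^ 2 / (4 * κ) := by
    intro B s hB
    rw [le_div_iff₀ (by linarith)]
    rcases abs_cases s with ⟨hh, _⟩ | ⟨hh, _⟩ <;> rw [hh]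
    · nlinarith [sq_nonneg (2 * κ * s - B)]
    · nlinarith [sq_nonneg (2 * κ * s + B)]
  refine ⟨(|α| + 1) ^ 2 / (4 * κ) + (|β| + 1) ^ 2 / (4 * κ), fun s t => ?_⟩
  have h1s := key (|α| + 1) s (by positivity)
  have h2t := key (|β| + 1) t (by positivity)
  have hsa : -(s * α) ≤ |s| * |α| := by rw [← abs_mul]; exact neg_le_abs _
  have htb : -(t * β) ≤ |t| * |β| := by rw [← abs_mul]; exact neg_le_abs _
  nlinarith [hQ s t]

lemma summable_exp_neg_nat : Summable (fun n : ℕ => Real.exp (-(n : ℝ))) := by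
  have : (fun n : ℕ => Real.exp (-(n : ℝ))) = fun n : ℕ => (Real.exp (-1)) ^ n := by
    funext n; rw [← Real.exp_nat_mul]; ring_nf
  rw [this]
  exact summable_geometric_of_lt_one (Real.exp_nonneg _)
    (by rw [Real.exp_lt_one_iff]; norm_num)

lemma summable_exp_neg_abs_int : Summable (fun n : ℤ => Real.exp (-|(n : ℝ)|)) := by
  apply Summable.of_nat_of_neg
  · exact summable_exp_neg_nat.congr (fun n => by simp)
  · exact summable_exp_neg_nat.congr (fun n => by simp)

lemma norm_thetaTerm (τ₁ τ₂ τ₁₂ : ℂ) (a c b d : ℝ) (x y : ℂ) (p : ℤ × ℤ) :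
    ‖thetaTerm τ₁ τ₂ τ₁₂ a c b d x y p‖ =
      Real.exp (-(Real.pi * τ₁.im * ((p.1 : ℝ) + a / 2) ^ 2 +
          Real.pi * τ₂.im * ((p.2 : ℝ) + c / 2) ^ 2 +
          2 * (Real.pi * τ₁₂.im) * ((p.1 : ℝ) + a / 2) * ((p.2 : ℝ) + c / 2)) -
        (((p.1 : ℝ) + a / 2) * (2 * Real.pi * x.im) + ((p.2 : ℝ) + c / 2) * (2 * Real.pi * y.im))) := by
  rw [thetaTerm, Complex.norm_exp]
  congr 1
  have h1 : ((p.1 : ℂ) + (a : ℂ) / 2) = (((p.1 : ℝ) + a / 2 : ℝ) : ℂ) := by push_cast; ring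
  have h2 : ((p.2 : ℂ) + (c : ℂ) / 2) = (((p.2 : ℝ) + c / 2 : ℝ) : ℂ) := by push_cast; ring
  rw [h1, h2]
  set s : ℝ := (p.1 : ℝ) + a / 2
  set t : ℝ := (p.2 : ℝ) + c / 2
  simp [Complex.add_re, Complex.mul_re, Complex.mul_im, Complex.I_re, Complex.I_im,
    Complex.ofReal_re, Complex.ofReal_im, Complex.add_im, pow_two, Complex.div_re,
    Complex.div_im, Complex.normSq]
  ring

lemma summable_norm_thetaTerm (τ₁ τ₂ τ₁₂ : ℂ) (hτ₁ : 0 < τ₁.im) (hτ₂ : 0 < τ₂.im)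
    (hτ : τ₁₂.im ^ 2 < τ₁.im * τ₂.im) (a c b d : ℝ) (x y : ℂ) :
    Summable (fun p : ℤ × ℤ => ‖thetaTerm τ₁ τ₂ τ₁₂ a c b d x y p‖) := by
  have hπ := Real.pi_pos
  obtain ⟨C, hC⟩ := quad_bound (Real.pi * τ₁.im) (Real.pi * τ₂.im) (Real.pi * τ₁₂.im)
    (by positivity) (by positivity)
    (by nlinarith [mul_pos (mul_pos hπ hπ) (sub_pos.mpr hτ)]) (2 * Real.pi * x.im) (2 * Real.pi * y.im)
  have hmaj : Summable (fun p : ℤ × ℤ =>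
      Real.exp (C + |a| / 2 + |c| / 2) * (Real.exp (-|(p.1 : ℝ)|) * Real.exp (-|(p.2 : ℝ)|))) :=
    (Summable.mul_of_nonneg summable_exp_neg_abs_int summable_exp_neg_abs_int
      (fun _ => (Real.exp_pos _).le) (fun _ => (Real.exp_pos _).le)).mul_left _
  apply Summable.of_nonneg_of_le (fun p => norm_nonneg _) _ hmaj
  intro p
  rw [norm_thetaTerm, ← Real.exp_add, ← Real.exp_add]
  apply Real.exp_le_exp.mpr
  set s : ℝ := (p.1 : ℝ) + a / 2
  set t : ℝ := (p.2 : ℝ) + c / 2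
  have h1 := hC s t
  have h2 : |(p.1 : ℝ)| - |a| / 2 ≤ |s| := by
    have := abs_sub_abs_le_abs_sub (p.1 : ℝ) (-(a / 2))
    have h3 : |(-(a/2) : ℝ)| = |a| / 2 := by rw [abs_neg, abs_div]; norm_num
    simp only [sub_neg_eq_add] at this
    rw [h3] at this; linarith [this]
  have h4 : |(p.2 : ℝ)| - |c| / 2 ≤ |t| := by
    have := abs_sub_abs_le_abs_sub (p.2 : ℝ) (-(c / 2))
    have h3 : |(-(c/2) : ℝ)| = |c| / 2 := by rw [abs_neg, abs_div]; norm_num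
    simp only [sub_neg_eq_add] at this
    rw [h3] at this; linarith [this]
  refine le_trans ?_ (by linarith :
    C - |s| - |t| ≤ C + |a| / 2 + |c| / 2 + (-|(p.1:ℝ)| + -|(p.2:ℝ)|))
  convert h1 using 2 <;> ring

/-- The parity splitting map. -/
def pmap (q : (Bool × Bool) × ((ℤ × ℤ) × (ℤ × ℤ))) : (ℤ × ℤ) × (ℤ × ℤ) :=
  ((q.2.1.1 + q.2.1.2 + (if q.1.1 then 1 else 0),
    q.2.2.1 + q.2.2.2 + (if q.1.2 then 1 else 0)),
   (q.2.1.1 - q.2.1.2, q.2.2.1 - q.2.2.2))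

lemma pmap_bijective : Function.Bijective pmap := by
  constructor
  · rintro ⟨⟨e1, e2⟩, ⟨⟨k, j⟩, ⟨l, i⟩⟩⟩ ⟨⟨f1, f2⟩, ⟨⟨k', j'⟩, ⟨l', i'⟩⟩⟩ h
    simp only [pmap, Prod.mk.injEq] at h ⊢
    rcases e1 <;> rcases e2 <;> rcases f1 <;> rcases f2 <;> simp_all <;> omega
  · rintro ⟨⟨m, n⟩, ⟨m', n'⟩⟩
    rcases Int.even_or_odd (m + m') with ⟨t, ht⟩ | ⟨t, ht⟩ <;>
      rcases Int.even_or_odd (n + n') with ⟨w, hw⟩ | ⟨w, hw⟩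
    · exact ⟨((false, false), ((t, t - m'), (w, w - n'))), by simp [pmap, Prod.ext_iff]; omega⟩
    · exact ⟨((false, true), ((t, t - m'), (w, w - n'))), by simp [pmap, Prod.ext_iff]; omega⟩
    · exact ⟨((true, false), ((t, t - m'), (w, w - n'))), by simp [pmap, Prod.ext_iff]; omega⟩
    · exact ⟨((true, true), ((t, t - m'), (w, w - n'))), by simp [pmap, Prod.ext_iff]; omega⟩

/-- The parity splitting bijection as an `Equiv`. -/
noncomputable def pequiv : ((Bool × Bool) × ((ℤ × ℤ) × (ℤ × ℤ))) ≃ ((ℤ × ℤ) × (ℤ × ℤ)) :=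
  Equiv.ofBijective pmap pmap_bijective

@[simp] lemma pequiv_apply (q) : pequiv q = pmap q := rfl

lemma exp_eq_neg_exp_of (z w : ℂ) (n : ℤ) (h : z = w + ((Real.pi : ℂ) * Complex.I +
    (n : ℂ) * (2 * (Real.pi : ℂ) * Complex.I))) :
    Complex.exp z = - Complex.exp w := by
  subst h
  rw [Complex.exp_add, Complex.exp_add, Complex.exp_pi_mul_I,
    Complex.exp_int_mul_two_pi_mul_I]
  ring

/-- The odd-parity (in the first variable) parts of the product series cancel. -/
lemma G_true (τ₁ τ₂ τ₁₂ : ℂ) (a c : ℝ) (u v : ℂ) (e₂ : Bool) :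
    (∑' r : (ℤ × ℤ) × (ℤ × ℤ),
        thetaTerm τ₁ τ₂ τ₁₂ a c 1 0 u v (pequiv ((true, e₂), r)).1 *
          thetaTerm τ₁ τ₂ τ₁₂ a c 0 0 u v (pequiv ((true, e₂), r)).2) = 0 := by
  set F : (ℤ × ℤ) × (ℤ × ℤ) → ℂ := fun r =>
    thetaTerm τ₁ τ₂ τ₁₂ a c 1 0 u v (pequiv ((true, e₂), r)).1 *
      thetaTerm τ₁ τ₂ τ₁₂ a c 0 0 u v (pequiv ((true, e₂), r)).2 with hF
  have hinv : Function.Involutive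
      (fun r : (ℤ × ℤ) × (ℤ × ℤ) =>
        ((r.1.1, -1 - r.1.2), (r.2.1, -(if e₂ then (1:ℤ) else 0) - r.2.2))) := by
    intro r
    refine Prod.ext (Prod.ext rfl ?_) (Prod.ext rfl ?_) <;> simp <;> ring
  have key : ∀ r : (ℤ × ℤ) × (ℤ × ℤ), F (hinv.toPerm _ r) = - F r := by
    rintro ⟨⟨k, j⟩, ⟨l, i⟩⟩
    show F ((k, -1 - j), (l, -(if e₂ then (1:ℤ) else 0) - i)) = - F ((k, j), (l, i))
    simp only [hF, pequiv_apply, pmap, thetaTerm, if_true]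
    rw [← Complex.exp_add, ← Complex.exp_add]
    exact exp_eq_neg_exp_of _ _ (-1 - j) (by push_cast; ring)
  have h1 : ∑' r, F (hinv.toPerm _ r) = ∑' r, F r := (hinv.toPerm _).tsum_eq F
  have h2 : ∑' r, F (hinv.toPerm _ r) = - ∑' r, F r := by
    rw [tsum_congr key, tsum_neg]
  have h3 : (∑' r, F r) = - ∑' r, F r := h1 ▸ h2
  exact add_self_eq_zero.mp (by linear_combination h3)


lemma im_two_mul (τ : ℂ) : (2 * τ).im = 2 * τ.im := by simp

/-- The even/even part of the product series. -/
lemma G_ff (τ₁ τ₂ τ₁₂ : ℂ) (hτ₁ : 0 < τ₁.im) (hτ₂ : 0 < τ₂.im)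
    (hτ : τ₁₂.im ^ 2 < τ₁.im * τ₂.im) (a c : ℝ) (u v : ℂ) :
    (∑' r : (ℤ × ℤ) × (ℤ × ℤ),
        thetaTerm τ₁ τ₂ τ₁₂ a c 1 0 u v (pequiv ((false, false), r)).1 *
          thetaTerm τ₁ τ₂ τ₁₂ a c 0 0 u v (pequiv ((false, false), r)).2) =
      Theta2 τ₁ τ₂ τ₁₂ a c 1 0 (2 * u) (2 * v) * Theta2 τ₁ τ₂ τ₁₂ 0 0 1 0 0 0 := by
  have h1 : 0 < (2 * τ₁).im := by rw [im_two_mul]; linarith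
  have h2 : 0 < (2 * τ₂).im := by rw [im_two_mul]; linarith
  have h3 : (2 * τ₁₂).im ^ 2 < (2 * τ₁).im * (2 * τ₂).im := by
    rw [im_two_mul, im_two_mul, im_two_mul]; nlinarith
  rw [Theta2, Theta2, theta_eq_tsum, theta_eq_tsum,
    tsum_mul_tsum_of_summable_norm
      (summable_norm_thetaTerm _ _ _ h1 h2 h3 a c 1 0 (2 * u) (2 * v))
      (summable_norm_thetaTerm _ _ _ h1 h2 h3 0 0 1 0 0 0),
    ← (Equiv.prodProdProdComm ℤ ℤ ℤ ℤ).tsum_eq]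
  apply tsum_congr
  rintro ⟨⟨k, j⟩, ⟨l, i⟩⟩
  simp only [pequiv_apply, pmap, thetaTerm, if_false, Equiv.prodProdProdComm_apply]
  rw [← Complex.exp_add, ← Complex.exp_add]
  congr 1
  push_cast
  ring

/-- The even/odd part of the product series. -/
lemma G_ft (τ₁ τ₂ τ₁₂ : ℂ) (hτ₁ : 0 < τ₁.im) (hτ₂ : 0 < τ₂.im)
    (hτ : τ₁₂.im ^ 2 < τ₁.im * τ₂.im) (a c : ℝ) (u v : ℂ) :
    (∑' r : (ℤ × ℤ) × (ℤ × ℤ),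
        thetaTerm τ₁ τ₂ τ₁₂ a c 1 0 u v (pequiv ((false, true), r)).1 *
          thetaTerm τ₁ τ₂ τ₁₂ a c 0 0 u v (pequiv ((false, true), r)).2) =
      Theta2 τ₁ τ₂ τ₁₂ a (c + 1) 1 0 (2 * u) (2 * v) * Theta2 τ₁ τ₂ τ₁₂ 0 1 1 0 0 0 := by
  have h1 : 0 < (2 * τ₁).im := by rw [im_two_mul]; linarith
  have h2 : 0 < (2 * τ₂).im := by rw [im_two_mul]; linarith
  have h3 : (2 * τ₁₂).im ^ 2 < (2 * τ₁).im * (2 * τ₂).im := by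
    rw [im_two_mul, im_two_mul, im_two_mul]; nlinarith
  rw [Theta2, Theta2, theta_eq_tsum, theta_eq_tsum,
    tsum_mul_tsum_of_summable_norm
      (summable_norm_thetaTerm _ _ _ h1 h2 h3 a (c + 1) 1 0 (2 * u) (2 * v))
      (summable_norm_thetaTerm _ _ _ h1 h2 h3 0 1 1 0 0 0),
    ← (Equiv.prodProdProdComm ℤ ℤ ℤ ℤ).tsum_eq]
  apply tsum_congr
  rintro ⟨⟨k, j⟩, ⟨l, i⟩⟩
  simp only [pequiv_apply, pmap, thetaTerm, if_false, if_true, Equiv.prodProdProdComm_apply]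
  rw [← Complex.exp_add, ← Complex.exp_add]
  congr 1
  push_cast
  ring

theorem two_term_relation_10 (τ₁ τ₂ τ₁₂ : ℂ)
    (hτ₁ : 0 < τ₁.im) (hτ₂ : 0 < τ₂.im) (hτ : τ₁₂.im ^ 2 < τ₁.im * τ₂.im)
    (a c : ℝ) (u v : ℂ) :
    theta τ₁ τ₂ τ₁₂ a c 1 0 u v * theta τ₁ τ₂ τ₁₂ a c 0 0 u v =
      Theta2 τ₁ τ₂ τ₁₂ a c 1 0 (2 * u) (2 * v) * Theta2 τ₁ τ₂ τ₁₂ 0 0 1 0 0 0 +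
        Theta2 τ₁ τ₂ τ₁₂ a (c + 1) 1 0 (2 * u) (2 * v) * Theta2 τ₁ τ₂ τ₁₂ 0 1 1 0 0 0 := by
  have hn1 := summable_norm_thetaTerm τ₁ τ₂ τ₁₂ hτ₁ hτ₂ hτ a c 1 0 u v
  have hn2 := summable_norm_thetaTerm τ₁ τ₂ τ₁₂ hτ₁ hτ₂ hτ a c 0 0 u v
  have hsg : Summable (fun z : (ℤ × ℤ) × (ℤ × ℤ) =>
      thetaTerm τ₁ τ₂ τ₁₂ a c 1 0 u v z.1 * thetaTerm τ₁ τ₂ τ₁₂ a c 0 0 u v z.2) :=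
    summable_mul_of_summable_norm hn1 hn2
  have hsg' : Summable (fun q : (Bool × Bool) × ((ℤ × ℤ) × (ℤ × ℤ)) =>
      thetaTerm τ₁ τ₂ τ₁₂ a c 1 0 u v (pequiv q).1 *
        thetaTerm τ₁ τ₂ τ₁₂ a c 0 0 u v (pequiv q).2) := pequiv.summable_iff.mpr hsg
  rw [theta_eq_tsum, theta_eq_tsum, tsum_mul_tsum_of_summable_norm hn1 hn2,
    ← pequiv.tsum_eq, Summable.tsum_prod hsg', tsum_fintype]
  simp only [Fintype.sum_prod_type, Fintype.sum_bool]
  rw [G_true τ₁ τ₂ τ₁₂ a c u v true, G_true τ₁ τ₂ τ₁₂ a c u v false,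
    G_ff τ₁ τ₂ τ₁₂ hτ₁ hτ₂ hτ a c u v, G_ft τ₁ τ₂ τ₁₂ hτ₁ hτ₂ hτ a c u v]
  ring
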